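/- Let n be a positive integer and let A be a subgroup of (ZMod n) × (ZMod n) with Nat.card A = n. Then there exists a unique positive integer d such that d² ∣ n and A is isomorphic as a group to (ZMod d) × (ZMod (n/d)). -/

import Mathlib

def zmodCongr {m k : ℕ} (h : m = k) : ZMod m ≃+ ZMod k := by subst h; exact AddEquiv.refl _

def piProdAddEquiv {ι : Type*} (f g : ι → Type*) [∀ i, AddZeroClass (f i)] [∀ i, AddZeroClass (g i)] :
    ((∀ i, f i) × (∀ i, g i)) ≃+ ∀ i, f i × g i where
  toFun p i := (p.1 i, p.2 i)
  invFun h := (fun i => (h i).1, fun i => (h i).2)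
  left_inv _ := rfl
  right_inv _ := rfl
  map_add' _ _ := rfl

noncomputable def zmodPiEquiv (m : ℕ) (hm : m ≠ 0) (s : Finset ℕ)
    (hp : ∀ p ∈ s, p.Prime) (hs : m.primeFactors ⊆ s) :
    ZMod m ≃+ ∀ p : s, ZMod ((p : ℕ) ^ m.factorization p) := by
  have hvan : ∀ x ∈ s, x ∉ m.primeFactors → x ^ m.factorization x = 1 := by
    intro x _ hx
    rw [← Nat.support_factorization, Finsupp.notMem_support_iff] at hx
    rw [hx, pow_zero]
  have hprod : (∏ p : s, (p : ℕ) ^ m.factorization p) = m := by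
    calc (∏ p : s, (p : ℕ) ^ m.factorization p)
        = ∏ p ∈ s, p ^ m.factorization p := Finset.prod_coe_sort s (fun p => p ^ m.factorization p)
      _ = ∏ p ∈ m.primeFactors, p ^ m.factorization p := (Finset.prod_subset hs hvan).symm
      _ = m := Nat.factorization_prod_pow_eq_self hm
  have cop : Pairwise fun p q : s => Nat.Coprime ((p:ℕ) ^ m.factorization p) ((q:ℕ)^ m.factorization q) :=
    fun p q hpq => Nat.Coprime.pow _ _ ((Nat.coprime_primes (hp p p.2) (hp q q.2)).mpr
      (fun h => hpq (Subtype.ext h)))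
  exact (zmodCongr hprod.symm).trans (ZMod.prodEquivPi _ cop).toAddEquiv

def swapEquiv (p α β : ℕ) : (ZMod (p ^ α) × ZMod (p ^ β)) ≃+ ZMod (p ^ min α β) × ZMod (p ^ max α β) := by
  by_cases h : α ≤ β
  · exact (zmodCongr (by rw [min_eq_left h])).prodCongr (zmodCongr (by rw [max_eq_right h]))
  · exact (AddEquiv.prodComm).trans
      ((zmodCongr (by rw [min_eq_right (le_of_not_ge h)])).prodCongr
        (zmodCongr (by rw [max_eq_left (le_of_not_ge h)])))

theorem zmod_gcd_lcm (x y : ℕ) (hx : x ≠ 0) (hy : y ≠ 0) :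
    Nonempty ((ZMod x × ZMod y) ≃+ ZMod (Nat.gcd x y) × ZMod (Nat.lcm x y)) := by
  set s : Finset ℕ := (x * y).primeFactors with hs
  have hxy : x * y ≠ 0 := mul_ne_zero hx hy
  have hp : ∀ p ∈ s, p.Prime := fun p hp => Nat.prime_of_mem_primeFactors hp
  have hsx : x.primeFactors ⊆ s := Nat.primeFactors_mono (dvd_mul_right x y) hxy
  have hsy : y.primeFactors ⊆ s := Nat.primeFactors_mono (dvd_mul_left y x) hxy
  have hsg : (Nat.gcd x y).primeFactors ⊆ s :=
    (Nat.primeFactors_mono (Nat.gcd_dvd_left x y) hx).trans hsx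
  have hsl : (Nat.lcm x y).primeFactors ⊆ s :=
    Nat.primeFactors_mono (Nat.lcm_dvd (dvd_mul_right x y) (dvd_mul_left y x)) hxy
  have hg0 : Nat.gcd x y ≠ 0 := Nat.gcd_ne_zero_left hx
  have hl0 : Nat.lcm x y ≠ 0 := Nat.lcm_ne_zero hx hy
  have hgf : ∀ p : s, (Nat.gcd x y).factorization p = min (x.factorization p) (y.factorization p) := by
    intro p
    rw [Nat.factorization_gcd hx hy]
    rfl
  have hlf : ∀ p : s, (Nat.lcm x y).factorization p = max (x.factorization p) (y.factorization p) := by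
    intro p
    rw [Nat.factorization_lcm hx hy]
    rfl
  refine ⟨((zmodPiEquiv x hx s hp hsx).prodCongr (zmodPiEquiv y hy s hp hsy)).trans <|
    (piProdAddEquiv _ _).trans <|
    (AddEquiv.piCongrRight (fun p : s => (swapEquiv p _ _).trans
      ((zmodCongr (by rw [hgf p])).prodCongr (zmodCongr (by rw [hlf p]))))).trans <|
    ((piProdAddEquiv _ _).symm.trans
      ((zmodPiEquiv _ hg0 s hp hsg).symm.prodCongr (zmodPiEquiv _ hl0 s hp hsl).symm))⟩

theorem zmod_d_unique (n : ℕ) (hn : 0 < n) (d e : ℕ) (hd2 : d^2 ∣ n) (he2 : e^2 ∣ n)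
    (f : (ZMod d × ZMod (n/d)) ≃+ ZMod e × ZMod (n/e)) : d = e := by
  have hdn : d ∣ n := dvd_trans (dvd_pow_self d two_ne_zero) hd2
  have hen : e ∣ n := dvd_trans (dvd_pow_self e two_ne_zero) he2
  have hdd : d ∣ n / d := (Nat.dvd_div_iff_mul_dvd hdn).mpr (by rwa [← pow_two])
  have hee : e ∣ n / e := (Nat.dvd_div_iff_mul_dvd hen).mpr (by rwa [← pow_two])
  have h1 : AddMonoid.exponent (ZMod d × ZMod (n/d)) = n / d := by
    rw [AddMonoid.exponent_prod, IsAddCyclic.exponent_eq_card, IsAddCyclic.exponent_eq_card,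
      Nat.card_zmod, Nat.card_zmod]
    exact Nat.dvd_antisymm (Nat.lcm_dvd hdd dvd_rfl) (Nat.dvd_lcm_right _ _)
  have h2 : AddMonoid.exponent (ZMod e × ZMod (n/e)) = n / e := by
    rw [AddMonoid.exponent_prod, IsAddCyclic.exponent_eq_card, IsAddCyclic.exponent_eq_card,
      Nat.card_zmod, Nat.card_zmod]
    exact Nat.dvd_antisymm (Nat.lcm_dvd hee dvd_rfl) (Nat.dvd_lcm_right _ _)
  have h := AddMonoid.exponent_eq_of_addEquiv f
  rw [h1, h2] at h
  have h' : n / (n/d) = n / (n/e) := by rw [h]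
  rwa [Nat.div_div_self hdn hn.ne', Nat.div_div_self hen hn.ne'] at h'

theorem addSubgroup_zmod_sq_structure (n : ℕ) (hn : 0 < n) (A : AddSubgroup (ZMod n × ZMod n)) :
    ∃ x y : ℕ, x ∣ n ∧ y ∣ n ∧ 0 < x ∧ 0 < y ∧ Nonempty (A ≃+ ZMod x × ZMod y) := by
  classical
  -- the linear surjection from ℤ²
  let φ : (Fin 2 → ℤ) →+ ZMod n × ZMod n :=
    { toFun := fun v => ((v 0 : ZMod n), (v 1 : ZMod n))
      map_zero' := by simp
      map_add' := by intro v w; simp [Prod.ext_iff] }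
  let φl : (Fin 2 → ℤ) →ₗ[ℤ] ZMod n × ZMod n := φ.toIntLinearMap
  have hφsurj : Function.Surjective φl := by
    rintro ⟨x, y⟩
    obtain ⟨a, ha⟩ := ZMod.intCast_surjective x
    obtain ⟨b, hb⟩ := ZMod.intCast_surjective y
    exact ⟨![a, b], by simp [φl, φ, Prod.ext_iff, ha, hb]⟩
  have hφtor : ∀ v : Fin 2 → ℤ, φl ((n : ℤ) • v) = 0 := by
    intro v
    rw [map_smul]
    show (n : ℤ) • φ v = 0
    rcases hp : φ v with ⟨x, y⟩
    rw [Prod.smul_mk, Prod.mk_eq_zero]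
    constructor <;>
    · rw [zsmul_eq_mul, Int.cast_natCast, ZMod.natCast_self, zero_mul]
  let AM : Submodule ℤ (ZMod n × ZMod n) := AddSubgroup.toIntSubmodule A
  let O : Submodule ℤ (Fin 2 → ℤ) := AM.comap φl
  let N : Submodule ℤ (Fin 2 → ℤ) := LinearMap.ker φl
  have hNO : N ≤ O := fun v hv => by
    simp only [N, LinearMap.mem_ker] at hv
    simp only [O, Submodule.mem_comap, hv]
    exact zero_mem AM
  -- A ≃ O ⧸ N'
  let f : O →ₗ[ℤ] ZMod n × ZMod n := φl ∘ₗ O.subtype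
  have hker : LinearMap.ker f = N.comap O.subtype := LinearMap.ker_comp _ _
  have hrange : LinearMap.range f = AM := by
    rw [LinearMap.range_comp, Submodule.range_subtype]
    show Submodule.map φl (Submodule.comap φl AM) = AM
    rw [Submodule.map_comap_eq, LinearMap.range_eq_top.mpr hφsurj, top_inf_eq]
  have eA : Nonempty (A ≃+ (O ⧸ N.comap O.subtype)) := by
    have e1 := (LinearMap.quotKerEquivRange f).toAddEquiv
    rw [hker, hrange] at e1
    refine ⟨?_⟩
    refine AddEquiv.trans ?_ e1.symm
    exact { toFun := fun a => ⟨a.1, a.2⟩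
            invFun := fun a => ⟨a.1, a.2⟩
            left_inv := fun _ => rfl
            right_inv := fun _ => rfl
            map_add' := fun _ _ => rfl }
  -- Smith normal form
  obtain ⟨n', o, hno, bO, bN, a, snf⟩ :=
    Submodule.exists_smith_normal_form_of_le (Pi.basisFun ℤ (Fin 2)) N O hNO
  -- o ≤ 2
  have ho2 : o ≤ 2 := by
    have li : LinearIndependent ℤ (fun i => (bO i : Fin 2 → ℤ)) :=
      bO.linearIndependent.map' O.subtype (Submodule.ker_subtype O)
    have := li.fintype_card_le_finrank
    simpa using this
  -- 2 ≤ n'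
  have hmemN : ∀ v : Fin 2 → ℤ, (n : ℤ) • v ∈ N := fun v => by
    simp only [N, LinearMap.mem_ker]; exact hφtor v
  have hn2 : 2 ≤ n' := by
    let w : Fin 2 → N := fun i => ⟨(n : ℤ) • Pi.basisFun ℤ (Fin 2) i, hmemN _⟩
    have libase : LinearIndependent ℤ (fun i : Fin 2 => (n : ℤ) • Pi.basisFun ℤ (Fin 2) i) := by
      rw [Fintype.linearIndependent_iff]
      intro g hg i
      have h := congrFun hg i
      simp only [Finset.sum_apply, Pi.smul_apply, Pi.basisFun_apply, Pi.single_apply,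
        smul_eq_mul, mul_ite, mul_one, mul_zero, Pi.zero_apply, smul_ite, smul_zero] at h
      rw [Finset.sum_ite_eq Finset.univ i] at h
      simp only [Finset.mem_univ, if_true] at h
      have hn' : (n : ℤ) ≠ 0 := Int.natCast_ne_zero.mpr hn.ne'
      exact by
        rcases mul_eq_zero.mp h with h1 | h1
        · exact h1
        · exact absurd h1 (by exact_mod_cast hn.ne')
    have liw : LinearIndependent ℤ w :=
      LinearIndependent.of_comp N.subtype (by exact libase)
    haveI := Module.Finite.of_basis bN
    have hc := liw.fintype_card_le_finrank
    rw [Module.finrank_eq_card_basis bN] at hc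
    simpa using hc
  -- so n' = o = 2
  have hn'2 : n' = 2 := le_antisymm (hno.trans ho2) hn2
  have ho2' : o = 2 := le_antisymm ho2 (hn2.trans hno)
  subst hn'2; subst ho2'
  have hcast : ∀ i : Fin 2, Fin.castLE hno i = i := fun i => Fin.ext rfl
  simp only [hcast] at snf
  -- membership characterization
  have mem_iff : ∀ x : O, (x ∈ N.comap O.subtype) ↔ ∀ i, a i ∣ bO.repr x i := by
    intro x
    have repr_sum : ∀ (c : Fin 2 → ℤ) i, bO.repr (∑ j, c j • a j • bO j) i = a i * c i := by
      intro c i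
      simp only [← mul_smul, map_sum, map_smul, Module.Basis.repr_self]
      rw [Finsupp.finset_sum_apply]
      simp only [Finsupp.smul_apply, Finsupp.single_apply, smul_eq_mul, mul_ite, mul_one, mul_zero]
      rw [Finset.sum_ite_eq' Finset.univ i]
      simp [mul_comm]
    constructor
    · intro hx
      have : (x : Fin 2 → ℤ) ∈ N := hx
      rw [bN.mem_submodule_iff'] at this
      obtain ⟨c, hc⟩ := this
      have hx2 : x = ∑ j, c j • a j • bO j := by
        apply Subtype.coe_injective
        show (x : Fin 2 → ℤ) = ((∑ j, c j • a j • bO j : O) : Fin 2 → ℤ)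
        rw [hc]
        push_cast [snf]
        rfl
      intro i
      rw [hx2, repr_sum]
      exact Dvd.intro _ rfl
    · intro h
      choose c hc using h
      have hx2 : x = ∑ j, c j • a j • bO j := by
        apply bO.repr.injective
        ext i
        rw [repr_sum, hc i]
      show (x : Fin 2 → ℤ) ∈ N
      rw [bN.mem_submodule_iff']
      refine ⟨c, ?_⟩
      rw [hx2]
      push_cast [snf]
      rfl
  -- nonzero coefficients
  have ha0 : ∀ i, a i ≠ 0 := by
    intro i hai
    have h0 : (bN i : Fin 2 → ℤ) = 0 := by rw [snf i, hai, zero_smul]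
    exact bN.ne_zero i (Subtype.coe_injective h0)
  -- divisibility
  have hdvd : ∀ i, a i ∣ (n : ℤ) := by
    intro i
    have hmem : ((n : ℤ) • bO i) ∈ N.comap O.subtype := by
      show ((((n : ℤ) • bO i : O)) : Fin 2 → ℤ) ∈ N
      push_cast
      exact hmemN _
    have := (mem_iff _).mp hmem i
    rwa [map_smul, Finsupp.smul_apply, Module.Basis.repr_self, Finsupp.single_apply, if_pos rfl,
      smul_eq_mul, mul_one] at this
  -- the quotient equivalence
  let I' : Submodule ℤ (Fin 2 → ℤ) := Submodule.pi Set.univ fun i => Ideal.span ({a i} : Set ℤ)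
  have hmap : Submodule.map (bO.equivFun : O →ₗ[ℤ] Fin 2 → ℤ) (N.comap O.subtype) = I' := by
    ext v
    simp only [Submodule.mem_map, Submodule.mem_pi, Set.mem_univ, forall_true_left,
      Ideal.mem_span_singleton, I', LinearEquiv.coe_coe, Module.Basis.equivFun_apply]
    constructor
    · rintro ⟨y, hy, rfl⟩ i
      exact (mem_iff y).mp hy i
    · intro hv
      refine ⟨∑ i, v i • bO i, ?_, ?_⟩
      · rw [mem_iff]
        intro i
        rw [map_sum]
        simp only [map_smul, Module.Basis.repr_self]
        rw [Finsupp.finset_sum_apply]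
        simp only [Finsupp.smul_apply, Finsupp.single_apply, smul_eq_mul, mul_ite, mul_one,
          mul_zero]
        rw [Finset.sum_ite_eq' Finset.univ i]
        simp only [Finset.mem_univ, if_true]
        exact hv i
      · exact bO.repr_sum_self v
  haveI : ∀ i : Fin 2, NeZero (a i).natAbs := fun i =>
    ⟨Int.natAbs_ne_zero.mpr (ha0 i)⟩
  let q1 : (O ⧸ N.comap O.subtype) ≃ₗ[ℤ] (Fin 2 → ℤ) ⧸ I' :=
    Submodule.Quotient.equiv (N.comap O.subtype) I' bO.equivFun hmap
  let q2 : ((Fin 2 → ℤ) ⧸ I') ≃ₗ[ℤ] ∀ i : Fin 2, ℤ ⧸ Ideal.span ({a i} : Set ℤ) :=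
    Submodule.quotientPi _
  let q3 : (∀ i : Fin 2, ℤ ⧸ Ideal.span ({a i} : Set ℤ)) ≃+ ∀ i : Fin 2, ZMod (a i).natAbs :=
    AddEquiv.piCongrRight fun i => (Int.quotientSpanEquivZMod (a i)).toAddEquiv
  let q4 : (∀ i : Fin 2, ZMod (a i).natAbs) ≃+ ZMod (a 0).natAbs × ZMod (a 1).natAbs :=
    { piFinTwoEquiv (fun i => ZMod (a i).natAbs) with map_add' := fun _ _ => rfl }
  obtain ⟨e0⟩ := eA
  let E : A ≃+ ZMod (a 0).natAbs × ZMod (a 1).natAbs :=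
    e0.trans (q1.toAddEquiv.trans (q2.toAddEquiv.trans (q3.trans q4)))
  refine ⟨(a 0).natAbs, (a 1).natAbs, ?_, ?_, ?_, ?_, ⟨E⟩⟩
  · have := Int.natAbs_dvd_natAbs.mpr (hdvd 0)
    simpa using this
  · have := Int.natAbs_dvd_natAbs.mpr (hdvd 1)
    simpa using this
  · exact Int.natAbs_pos.mpr (ha0 0)
  · exact Int.natAbs_pos.mpr (ha0 1)

theorem exists_unique_type_of_subgroup (n : ℕ) (hn : 0 < n)
    (A : AddSubgroup (ZMod n × ZMod n)) (hA : Nat.card A = n) :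
    ∃! d : ℕ, 0 < d ∧ d ^ 2 ∣ n ∧ Nonempty (A ≃+ ZMod d × ZMod (n / d)) := by
  obtain ⟨x, y, hxn, hyn, hx0, hy0, ⟨E⟩⟩ := addSubgroup_zmod_sq_structure n hn A
  have hxy : x * y = n := by
    rw [← hA, Nat.card_congr E.toEquiv, Nat.card_prod, Nat.card_zmod, Nat.card_zmod]
  set d := Nat.gcd x y with hd
  have hd0 : 0 < d := Nat.gcd_pos_of_pos_left y hx0
  have hd2 : d ^ 2 ∣ n := by
    rw [pow_two, ← hxy]
    exact mul_dvd_mul (Nat.gcd_dvd_left x y) (Nat.gcd_dvd_right x y)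
  have hlcm : Nat.lcm x y = n / d := by
    have h : n = d * Nat.lcm x y := by rw [Nat.gcd_mul_lcm, hxy]
    rw [h, Nat.mul_div_cancel_left _ hd0]
  obtain ⟨F⟩ := zmod_gcd_lcm x y hx0.ne' hy0.ne'
  have ED : A ≃+ ZMod d × ZMod (n / d) :=
    E.trans (F.trans ((AddEquiv.refl _).prodCongr (zmodCongr hlcm)))
  refine ⟨d, ⟨hd0, hd2, ⟨ED⟩⟩, ?_⟩
  rintro e ⟨he0, he2, ⟨G⟩⟩
  exact (zmod_d_unique n hn d e hd2 he2 (ED.symm.trans G)).symm
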